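/- arXiv:2202.12968 — 3 statements merged into one kernel-verified Lean document; each statement's English description precedes it below -/
import Mathlib

section
/- Let P and Q be probability measures on a measurable space such that for all measurable sets S, P(S) ≤ e^ε·Q(S) + δ and Q(S) ≤ e^ε·P(S) + δ, with ε ≥ 0 and 0 ≤ δ ≤ 1. Then the total variation distance between P and Q is at most 1 − (2/(1+e^ε))·(1−δ), i.e., for every measurable set S, P(S) − Q(S) ≤ 1 − (2/(1+e^ε))·(1−δ). -/
open Real MeasureTheory

/-- (ε,δ)-indistinguishability implies a total-variation bound:
P(S) - Q(S) ≤ 1 - (2/(1+e^ε))(1-δ) for every measurable S. -/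
theorem stmt_3 {Ω : Type*} [MeasurableSpace Ω] (P Q : Measure Ω)
    [IsProbabilityMeasure P] [IsProbabilityMeasure Q]
    (ε δ : ℝ) (hε : 0 ≤ ε) (hδ0 : 0 ≤ δ) (hδ1 : δ ≤ 1)
    (hPQ : ∀ S : Set Ω, MeasurableSet S →
      P S ≤ ENNReal.ofReal (exp ε) * Q S + ENNReal.ofReal δ)
    (hQP : ∀ S : Set Ω, MeasurableSet S →
      Q S ≤ ENNReal.ofReal (exp ε) * P S + ENNReal.ofReal δ) :
    ∀ S : Set Ω, MeasurableSet S →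
      (P S).toReal - (Q S).toReal ≤ 1 - (2 / (1 + exp ε)) * (1 - δ) := by
  intro S hS
  set a := (P S).toReal with ha
  set b := (Q S).toReal with hb
  set E := exp ε with hE
  have hE1 : (1:ℝ) ≤ E := Real.one_le_exp hε
  have hfin : ∀ (μ : Measure Ω) [IsProbabilityMeasure μ] (T : Set Ω), μ T ≠ ⊤ :=
    fun μ _ T => measure_ne_top μ T
  -- first inequality: a ≤ E*b + δ
  have h1 : a ≤ E * b + δ := by
    have := hPQ S hS
    have hr := ENNReal.toReal_mono (by finiteness) this
    rwa [ENNReal.toReal_add (by finiteness) (by finiteness), ENNReal.toReal_mul,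
      ENNReal.toReal_ofReal (exp_nonneg ε), ENNReal.toReal_ofReal hδ0] at hr
  -- second inequality: (1-b) ≤ E*(1-a) + δ
  have hPc : (P Sᶜ).toReal = 1 - a := by
    rw [measure_compl hS (measure_ne_top P S), measure_univ,
      ENNReal.toReal_sub_of_le prob_le_one ENNReal.one_ne_top, ENNReal.toReal_one]
  have hQc : (Q Sᶜ).toReal = 1 - b := by
    rw [measure_compl hS (measure_ne_top Q S), measure_univ,
      ENNReal.toReal_sub_of_le prob_le_one ENNReal.one_ne_top, ENNReal.toReal_one]
  have h2 : 1 - b ≤ E * (1 - a) + δ := by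
    have := hQP Sᶜ hS.compl
    have hr := ENNReal.toReal_mono (by finiteness) this
    rwa [ENNReal.toReal_add (by finiteness) (by finiteness), ENNReal.toReal_mul,
      ENNReal.toReal_ofReal (exp_nonneg ε), ENNReal.toReal_ofReal hδ0, hPc, hQc] at hr
  have hpos : (0:ℝ) < 1 + E := by linarith
  have key : (a - b) * (1 + E) ≤ E - 1 + 2 * δ := by nlinarith
  have : a - b ≤ (E - 1 + 2 * δ) / (1 + E) := by
    rw [le_div_iff₀ hpos]; exact key
  have heq : (E - 1 + 2 * δ) / (1 + E) = 1 - 2 / (1 + E) * (1 - δ) := by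
    field_simp; ring
  linarith [heq ▸ this]
end

section
/- Under the hypotheses of Theorem 2, if additionally u takes values in [0, B], then Adv(𝒜, 𝒦) ≤ (1 − (2/(1+e^ε))(1−δ)) · B. In particular, when δ = 0 and ε = 0 the advantage is at most 0. -/
open Real MeasureTheory

/-- Corollary 1: if the attack advantage satisfies the Theorem 2 bound with
M = (1/n)∑ᵢ E[sup_y u(y, Yᵢ)] and u takes values in [0,B], then
Adv ≤ (1 - (2/(1+e^ε))(1-δ))·B; in particular Adv ≤ 0 when ε = 0 and δ = 0. -/
theorem stmt_8 {Ω : Type*} [MeasurableSpace Ω] (μ : Measure Ω) [IsProbabilityMeasure μ]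
    {𝒴 : Type*} [Fintype 𝒴] [Nonempty 𝒴]
    (ε δ B : ℝ) (hε : 0 ≤ ε) (hδ0 : 0 ≤ δ) (hδ1 : δ ≤ 1) (hB : 0 ≤ B)
    (u : 𝒴 → 𝒴 → ℝ) (hu0 : ∀ a b, 0 ≤ u a b) (huB : ∀ a b, u a b ≤ B)
    (n : ℕ) (hn : 0 < n) (Y : Fin n → Ω → 𝒴)
    (Adv M : ℝ)
    (hM : M = (1 / (n : ℝ)) * ∑ i, ∫ ω, ⨆ y : 𝒴, u y (Y i ω) ∂μ)
    (hAdv : Adv ≤ (1 - (2 / (1 + exp ε)) * (1 - δ)) * M) :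
    Adv ≤ (1 - (2 / (1 + exp ε)) * (1 - δ)) * B ∧
      (ε = 0 → δ = 0 → Adv ≤ 0) := by
  have hexp : (1 : ℝ) ≤ exp ε := by
    simpa using Real.exp_le_exp.2 hε
  have hpos : (0 : ℝ) < 1 + exp ε := by linarith
  have hc : 0 ≤ 1 - (2 / (1 + exp ε)) * (1 - δ) := by
    have h2 : 2 / (1 + exp ε) ≤ 1 := by
      rw [div_le_one hpos]; linarith
    have h3 : (2 / (1 + exp ε)) * (1 - δ) ≤ 1 * 1 := by
      apply mul_le_mul h2 (by linarith) (by linarith)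
      norm_num
    linarith
  have hint : ∀ i : Fin n, (∫ ω, ⨆ y : 𝒴, u y (Y i ω) ∂μ) ≤ B := by
    intro i
    by_cases h : Integrable (fun ω => ⨆ y : 𝒴, u y (Y i ω)) μ
    · calc (∫ ω, ⨆ y : 𝒴, u y (Y i ω) ∂μ) ≤ ∫ _, B ∂μ := by
            apply integral_mono h (integrable_const B)
            intro ω
            exact ciSup_le fun y => huB y _
        _ = B := by simp
    · rw [integral_undef h]; exact hB
  have hMB : M ≤ B := by
    rw [hM]
    have hsum : (∑ i, ∫ ω, ⨆ y : 𝒴, u y (Y i ω) ∂μ) ≤ (n : ℝ) * B := by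
      calc (∑ i : Fin n, ∫ ω, ⨆ y : 𝒴, u y (Y i ω) ∂μ) ≤ ∑ _i : Fin n, B :=
            Finset.sum_le_sum fun i _ => hint i
        _ = (n : ℝ) * B := by simp [mul_comm]
    have hnpos : (0 : ℝ) < (n : ℝ) := by exact_mod_cast hn
    rw [div_mul_eq_mul_div, one_mul, div_le_iff₀ hnpos]
    linarith [hsum]
  have h1 : Adv ≤ (1 - (2 / (1 + exp ε)) * (1 - δ)) * B :=
    hAdv.trans (mul_le_mul_of_nonneg_left hMB hc)
  refine ⟨h1, fun hε0 hδ0' => ?_⟩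
  subst hε0 hδ0'
  simp only [Real.exp_zero] at h1
  norm_num at h1
  exact h1
end

section
/- Let 𝒴 = {−1, 1}, let features X_1 = … = X_r = 1 and X_{r+1} = … = X_{2r} = −1, and let true labels y_i = X_i deterministically. Let ỹ_i be independent randomized responses with P(ỹ_i = y_i) = e^ε/(e^ε+1), and define f(1) = sign(∑_{i=1}^r ỹ_i), f(−1) = sign(∑_{i=r+1}^{2r} ỹ_i). Then the expected training accuracy E[(1/(2r)) ∑_{i=1}^{2r} 1[f(X_i) = y_i]] is at least 1 − 2·exp(−(e^ε/(e^ε+1) − 1/2)²·2r). -/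
open Real MeasureTheory ProbabilityTheory


lemma aux_measurable_sign {Ω : Type*} [MeasurableSpace Ω] {g : Ω → ℝ} (hg : Measurable g) :
    Measurable (fun ω => Real.sign (g ω)) := by
  have : (fun ω => Real.sign (g ω)) =
      fun ω => if g ω < 0 then (-1 : ℝ) else if 0 < g ω then 1 else 0 := by
    funext ω; rw [Real.sign]
  rw [this]
  exact Measurable.ite (measurableSet_lt hg measurable_const) measurable_const
    (Measurable.ite (measurableSet_lt measurable_const hg) measurable_const measurable_const)

lemma aux_two_point {Ω : Type*} [MeasurableSpace Ω] (μ : Measure Ω) [IsProbabilityMeasure μ]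
    {X : Ω → ℝ} (hX : Measurable X) (h : ∀ᵐ ω ∂μ, X ω = 1 ∨ X ω = -1) (t : ℝ) :
    Integrable (fun ω => exp (t * X ω)) μ ∧
      mgf X μ t = (μ {ω | X ω = 1}).toReal * exp t
        + (1 - (μ {ω | X ω = 1}).toReal) * exp (-t) ∧
      (μ {ω | X ω = 1}).toReal + (μ {ω | X ω = -1}).toReal = 1 := by
  have hs1 : MeasurableSet {ω | X ω = 1} := hX (measurableSet_singleton 1)
  have hs2 : MeasurableSet {ω | X ω = -1} := hX (measurableSet_singleton (-1))
  have hdisj : Disjoint {ω | X ω = 1} {ω | X ω = -1} := by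
    rw [Set.disjoint_left]; intro ω h1 h2
    simp only [Set.mem_setOf_eq] at h1 h2; rw [h1] at h2; norm_num at h2
  have hsum : (μ {ω | X ω = 1}).toReal + (μ {ω | X ω = -1}).toReal = 1 := by
    have hu : μ ({ω | X ω = 1} ∪ {ω | X ω = -1}) = 1 := by
      rw [← measure_univ (μ := μ)]
      refine measure_congr ?_
      rw [Filter.eventuallyEq_set]
      filter_upwards [h] with ω hω
      simp only [Set.mem_union, Set.mem_setOf_eq, Set.mem_univ, iff_true]
      exact hω
    rw [measure_union hdisj hs2] at hu
    rw [← ENNReal.toReal_add (measure_ne_top _ _) (measure_ne_top _ _), hu, ENNReal.toReal_one]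
  have hae : (fun ω => exp (t * X ω)) =ᵐ[μ]
      fun ω => Set.indicator {ω | X ω = 1} (fun _ => exp t - exp (-t)) ω + exp (-t) := by
    filter_upwards [h] with ω hω
    rcases hω with h1 | h1
    · have hm : ω ∈ {ω | X ω = 1} := h1
      rw [Set.indicator_of_mem hm, h1]; ring
    · have hm : ω ∉ {ω | X ω = 1} := by
        simp only [Set.mem_setOf_eq, h1]; norm_num
      rw [Set.indicator_of_notMem hm, h1]; ring
  have hint2 : Integrable
      (fun ω => Set.indicator {ω | X ω = 1} (fun _ => exp t - exp (-t)) ω + exp (-t)) μ :=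
    ((integrable_const _).indicator hs1).add (integrable_const _)
  have hint : Integrable (fun ω => exp (t * X ω)) μ := hint2.congr hae.symm
  refine ⟨hint, ?_, hsum⟩
  rw [mgf, integral_congr_ae hae, integral_add ((integrable_const _).indicator hs1)
    (integrable_const _), integral_indicator_const _ hs1, integral_const, probReal_univ]
  simp only [smul_eq_mul, measureReal_def, ENNReal.toReal_one, one_smul]
  ring

lemma aux_compl_toReal {Ω : Type*} [MeasurableSpace Ω] (μ : Measure Ω) [IsProbabilityMeasure μ]
    {s : Set Ω} (hs : MeasurableSet s) : (μ sᶜ).toReal = 1 - (μ s).toReal := by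
  rw [prob_compl_eq_one_sub hs, ENNReal.toReal_sub_of_le prob_le_one ENNReal.one_ne_top,
    ENNReal.toReal_one]


lemma aux_scalar (p : ℝ) (hp1 : 1/2 < p) (hp2 : p < 1) :
    ∃ t : ℝ, t < 0 ∧ p * exp t + (1 - p) * exp (-t) ≤ exp (-(p - 1/2)^2 * 2) := by
  have hq0 : 0 < 1 - p := by linarith
  have hp0 : 0 < p := by linarith
  have hsq : 0 < Real.sqrt ((1-p)/p) := Real.sqrt_pos.mpr (div_pos hq0 hp0)
  refine ⟨Real.log (Real.sqrt ((1-p)/p)), ?_, ?_⟩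
  · apply Real.log_neg hsq
    have h1 : Real.sqrt ((1-p)/p) < Real.sqrt 1 :=
      Real.sqrt_lt_sqrt (by positivity) (by rw [div_lt_one hp0]; linarith)
    simpa using h1
  · have he : exp (Real.log (Real.sqrt ((1-p)/p))) = Real.sqrt ((1-p)/p) := Real.exp_log hsq
    have he' : exp (-(Real.log (Real.sqrt ((1-p)/p)))) = Real.sqrt (p/(1-p)) := by
      rw [Real.exp_neg, he, ← Real.sqrt_inv, inv_div]
    rw [he, he']
    have h1 : p * Real.sqrt ((1-p)/p) = Real.sqrt (p * (1-p)) := by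
      rw [show p * Real.sqrt ((1-p)/p) = Real.sqrt (p^2) * Real.sqrt ((1-p)/p) by
          rw [Real.sqrt_sq hp0.le],
        ← Real.sqrt_mul (by positivity)]
      congr 1
      field_simp
    have h2 : (1 - p) * Real.sqrt (p/(1-p)) = Real.sqrt (p * (1-p)) := by
      rw [show (1-p) * Real.sqrt (p/(1-p)) = Real.sqrt ((1-p)^2) * Real.sqrt (p/(1-p)) by
          rw [Real.sqrt_sq hq0.le],
        ← Real.sqrt_mul (by positivity)]
      congr 1
      field_simp
    rw [h1, h2]
    have h4 : Real.sqrt (p * (1-p)) + Real.sqrt (p * (1-p)) = Real.sqrt (4 * (p * (1-p))) := by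
      have hm : Real.sqrt (4 * (p * (1-p))) = Real.sqrt 4 * Real.sqrt (p * (1-p)) :=
        Real.sqrt_mul (by norm_num) _
      have h40 : Real.sqrt 4 = 2 := by
        rw [show (4:ℝ) = 2^2 by norm_num]; exact Real.sqrt_sq (by norm_num)
      rw [hm, h40]; ring
    rw [h4]
    have hrhs : exp (-(p - 1/2)^2 * 2) = Real.sqrt ((exp (-(p - 1/2)^2 * 2))^2) :=
      (Real.sqrt_sq (Real.exp_pos _).le).symm
    rw [hrhs]
    apply Real.sqrt_le_sqrt
    rw [sq, ← Real.exp_add]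
    nlinarith [Real.add_one_le_exp (-(p - 1/2)^2 * 2 + -(p - 1/2)^2 * 2)]

lemma aux_card (r : ℕ) :
    (Finset.univ.filter (fun j : Fin (2*r) => (j:ℕ) < r)).card = r := by
  have h : Finset.univ.filter (fun j : Fin (2*r) => (j:ℕ) < r)
      = Finset.univ.map (Fin.castLEEmb (by omega : r ≤ 2*r)) := by
    ext j
    simp only [Finset.mem_filter, Finset.mem_univ, true_and, Finset.mem_map,
      Fin.castLEEmb_apply]
    constructor
    · intro hj; exact ⟨⟨j, hj⟩, Fin.ext rfl⟩
    · rintro ⟨a, rfl⟩; simpa using a.isLt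
  rw [h, Finset.card_map]
  simp

lemma aux_card2 (r : ℕ) :
    (Finset.univ.filter (fun j : Fin (2*r) => r ≤ (j:ℕ))).card = r := by
  have h2 := Finset.card_filter_add_card_filter_not
    (s := (Finset.univ : Finset (Fin (2*r)))) (p := fun j => (j:ℕ) < r)
  simp only [not_lt, Finset.card_univ, Fintype.card_fin, aux_card r] at h2
  omega


/-- The explicit construction in the impossibility theorem: on 2r points with
deterministic labels y_i = X_i ∈ {−1,1}, a majority-vote classifier trained on
ε-randomized-response labels has expected training accuracy at least
1 − 2·exp(−(e^ε/(e^ε+1) − 1/2)²·2r). -/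
theorem stmt_15 {Ω : Type*} [MeasurableSpace Ω] (μ : Measure Ω) [IsProbabilityMeasure μ]
    (ε : ℝ) (hε : 0 < ε) (r : ℕ) (hr : 0 < r)
    (y : Fin (2 * r) → ℝ) (hy : ∀ i, y i = if (i : ℕ) < r then 1 else -1)
    (ytil : Fin (2 * r) → Ω → ℝ) (hmeas : ∀ i, Measurable (ytil i))
    (hindep : iIndepFun ytil μ)
    (hrange : ∀ i, ∀ᵐ ω ∂μ, ytil i ω = 1 ∨ ytil i ω = -1)
    (hp : ∀ i, (μ {ω | ytil i ω = y i}).toReal = exp ε / (exp ε + 1))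
    (f : ℝ → Ω → ℝ)
    (hf1 : ∀ ω, f 1 ω = Real.sign (∑ j : Fin (2 * r), if (j : ℕ) < r then ytil j ω else 0))
    (hf2 : ∀ ω, f (-1) ω = Real.sign (∑ j : Fin (2 * r), if r ≤ (j : ℕ) then ytil j ω else 0)) :
    1 - 2 * exp (-(exp ε / (exp ε + 1) - 1 / 2) ^ 2 * (2 * r)) ≤
      ∫ ω, (1 / (2 * (r : ℝ))) *
        ∑ i : Fin (2 * r), (if f (y i) ω = y i then (1 : ℝ) else 0) ∂μ := by
  classical
  set p : ℝ := exp ε / (exp ε + 1) with hpdef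
  have hexp1 : (1:ℝ) < exp ε := by have := Real.add_one_le_exp ε; linarith
  have hden : (0:ℝ) < exp ε + 1 := by linarith
  have hp1 : 1/2 < p := by rw [hpdef, lt_div_iff₀ hden]; linarith
  have hp2 : p < 1 := by rw [hpdef, div_lt_one hden]; linarith
  obtain ⟨t, htneg, htv⟩ := aux_scalar p hp1 hp2
  set E : ℝ := exp (-(p - 1/2)^2 * (2*(r:ℝ))) with hEdef
  set s₁ : Finset (Fin (2*r)) := Finset.univ.filter (fun j => (j:ℕ) < r) with hs₁
  set s₂ : Finset (Fin (2*r)) := Finset.univ.filter (fun j => r ≤ (j:ℕ)) with hs₂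
  set S₁ : Ω → ℝ := ∑ i ∈ s₁, ytil i with hS₁
  set S₂ : Ω → ℝ := ∑ i ∈ s₂, ytil i with hS₂
  have hS₁app : ∀ ω, S₁ ω = ∑ j : Fin (2*r), if (j:ℕ) < r then ytil j ω else 0 := by
    intro ω
    rw [hS₁, Finset.sum_apply, hs₁, Finset.sum_filter]
  have hS₂app : ∀ ω, S₂ ω = ∑ j : Fin (2*r), if r ≤ (j:ℕ) then ytil j ω else 0 := by
    intro ω
    rw [hS₂, Finset.sum_apply, hs₂, Finset.sum_filter]
  have hS₁meas : Measurable S₁ := by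
    have he : S₁ = fun a => ∑ i ∈ s₁, ytil i a := by
      funext a; rw [hS₁, Finset.sum_apply]
    rw [he]; exact Finset.measurable_sum _ (fun i _ => hmeas i)
  have hS₂meas : Measurable S₂ := by
    have he : S₂ = fun a => ∑ i ∈ s₂, ytil i a := by
      funext a; rw [hS₂, Finset.sum_apply]
    rw [he]; exact Finset.measurable_sum _ (fun i _ => hmeas i)
  have hcoin1 : ∀ i : Fin (2*r), (i:ℕ) < r → (μ {ω | ytil i ω = 1}).toReal = p := by
    intro i hi
    have h' := hp i
    rw [hy i, if_pos hi] at h'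
    exact h'
  have hcoin2 : ∀ i : Fin (2*r), r ≤ (i:ℕ) → (μ {ω | ytil i ω = -1}).toReal = p := by
    intro i hi
    have h' := hp i
    rw [hy i, if_neg (not_lt.mpr hi)] at h'
    exact h'
  have htp := fun (i : Fin (2*r)) (s : ℝ) => aux_two_point μ (hmeas i) (hrange i) s
  have hv1 : ∀ i ∈ s₁, mgf (ytil i) μ t = p * exp t + (1-p) * exp (-t) := by
    intro i hi
    rw [hs₁] at hi
    simp only [Finset.mem_filter, Finset.mem_univ, true_and] at hi
    obtain ⟨-, hmgf, -⟩ := htp i t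
    rw [hmgf, hcoin1 i hi]
  have hv2 : ∀ i ∈ s₂, mgf (ytil i) μ (-t) = p * exp t + (1-p) * exp (-t) := by
    intro i hi
    rw [hs₂] at hi
    simp only [Finset.mem_filter, Finset.mem_univ, true_and] at hi
    obtain ⟨-, hmgf, hsum⟩ := htp i (-t)
    have ha : (μ {ω | ytil i ω = 1}).toReal = 1 - p := by
      have := hcoin2 i hi; linarith
    rw [hmgf, ha, neg_neg]; ring
  have hvnonneg : (0:ℝ) ≤ p * exp t + (1-p) * exp (-t) := by
    nlinarith [Real.exp_pos t, Real.exp_pos (-t)]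
  have htail1 : (μ {ω | S₁ ω ≤ 0}).toReal ≤ E := by
    have hch := measure_le_le_exp_mul_mgf (μ := μ) (X := S₁) 0 htneg.le
      (by rw [hS₁]; exact hindep.integrable_exp_mul_sum hmeas (fun i _ => (htp i t).1))
    calc (μ {ω | S₁ ω ≤ 0}).toReal ≤ exp (-t * 0) * mgf S₁ μ t := hch
      _ = mgf S₁ μ t := by rw [mul_zero, Real.exp_zero, one_mul]
      _ = ∏ i ∈ s₁, mgf (ytil i) μ t := by rw [hS₁]; exact hindep.mgf_sum hmeas s₁
      _ = (p * exp t + (1-p) * exp (-t)) ^ s₁.card := by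
          rw [Finset.prod_congr rfl hv1, Finset.prod_const]
      _ = (p * exp t + (1-p) * exp (-t)) ^ r := by rw [hs₁, aux_card]
      _ ≤ (exp (-(p - 1/2)^2 * 2)) ^ r := pow_le_pow_left₀ hvnonneg htv r
      _ = E := by
          rw [← Real.exp_nat_mul, hEdef]
          congr 1
          push_cast
          ring
  have htail2 : (μ {ω | 0 ≤ S₂ ω}).toReal ≤ E := by
    have hch := measure_ge_le_exp_mul_mgf (μ := μ) (X := S₂) 0 (by linarith : (0:ℝ) ≤ -t)
      (by rw [hS₂]; exact hindep.integrable_exp_mul_sum hmeas (fun i _ => (htp i (-t)).1))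
    calc (μ {ω | 0 ≤ S₂ ω}).toReal ≤ exp (-(-t) * 0) * mgf S₂ μ (-t) := hch
      _ = mgf S₂ μ (-t) := by rw [mul_zero, Real.exp_zero, one_mul]
      _ = ∏ i ∈ s₂, mgf (ytil i) μ (-t) := by rw [hS₂]; exact hindep.mgf_sum hmeas s₂
      _ = (p * exp t + (1-p) * exp (-t)) ^ s₂.card := by
          rw [Finset.prod_congr rfl hv2, Finset.prod_const]
      _ = (p * exp t + (1-p) * exp (-t)) ^ r := by rw [hs₂, aux_card2]
      _ ≤ (exp (-(p - 1/2)^2 * 2)) ^ r := pow_le_pow_left₀ hvnonneg htv r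
      _ = E := by
          rw [← Real.exp_nat_mul, hEdef]
          congr 1
          push_cast
          ring
  set A : Set Ω := {ω | 0 < S₁ ω} with hA
  set B : Set Ω := {ω | S₂ ω < 0} with hB
  have hAmeas : MeasurableSet A := measurableSet_lt measurable_const hS₁meas
  have hBmeas : MeasurableSet B := measurableSet_lt hS₂meas measurable_const
  have hAlb : 1 - E ≤ (μ A).toReal := by
    have hAc : A = {ω | S₁ ω ≤ 0}ᶜ := by
      rw [hA]; ext ω; simp [not_le]
    rw [hAc, aux_compl_toReal μ (measurableSet_le hS₁meas measurable_const)]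
    linarith
  have hBlb : 1 - E ≤ (μ B).toReal := by
    have hBc : B = {ω | 0 ≤ S₂ ω}ᶜ := by
      rw [hB]; ext ω; simp [not_le]
    rw [hBc, aux_compl_toReal μ (measurableSet_le measurable_const hS₂meas)]
    linarith
  have hf1m : Measurable (f 1) := by
    have hfe : f 1 = fun ω => Real.sign (S₁ ω) := by
      funext ω; rw [hf1 ω, hS₁app ω]
    rw [hfe]; exact aux_measurable_sign hS₁meas
  have hf2m : Measurable (f (-1)) := by
    have hfe : f (-1) = fun ω => Real.sign (S₂ ω) := by
      funext ω; rw [hf2 ω, hS₂app ω]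
    rw [hfe]; exact aux_measurable_sign hS₂meas
  have hFi : ∀ i : Fin (2*r), Integrable (fun ω => if f (y i) ω = y i then (1:ℝ) else 0) μ := by
    intro i
    have hm : Measurable (f (y i)) := by
      rcases lt_or_ge (i:ℕ) r with hi | hi
      · rw [hy i, if_pos hi]; exact hf1m
      · rw [hy i, if_neg (not_lt.mpr hi)]; exact hf2m
    have hset : MeasurableSet {ω | f (y i) ω = y i} := hm (measurableSet_singleton _)
    have heq : (fun ω => if f (y i) ω = y i then (1:ℝ) else 0)
        = Set.indicator {ω | f (y i) ω = y i} (fun _ => (1:ℝ)) := by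
      funext ω
      simp [Set.indicator_apply, Set.mem_setOf_eq]
    rw [heq]
    exact (integrable_const 1).indicator hset
  have hFint : Integrable (fun ω => (1/(2*(r:ℝ))) *
      ∑ i : Fin (2*r), if f (y i) ω = y i then (1:ℝ) else 0) μ :=
    (integrable_finset_sum _ (fun i _ => hFi i)).const_mul _
  set G : Ω → ℝ := fun ω => (1/2) * (Set.indicator A (fun _ => (1:ℝ)) ω
      + Set.indicator B (fun _ => (1:ℝ)) ω) with hG
  have hGint : Integrable G μ :=
    (((integrable_const 1).indicator hAmeas).add ((integrable_const 1).indicator hBmeas)).const_mul _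
  have hGF : ∀ ω, G ω ≤ (1/(2*(r:ℝ))) *
      ∑ i : Fin (2*r), if f (y i) ω = y i then (1:ℝ) else 0 := by
    intro ω
    set aA : ℝ := Set.indicator A (fun _ => (1:ℝ)) ω with haA
    set aB : ℝ := Set.indicator B (fun _ => (1:ℝ)) ω with haB
    have haA0 : 0 ≤ aA := by rw [haA]; exact Set.indicator_nonneg (fun _ _ => zero_le_one) ω
    have haB0 : 0 ≤ aB := by rw [haB]; exact Set.indicator_nonneg (fun _ _ => zero_le_one) ω
    have hsum_ge : ∑ i : Fin (2*r), (if (i:ℕ) < r then aA else aB)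
        ≤ ∑ i : Fin (2*r), (if f (y i) ω = y i then (1:ℝ) else 0) := by
      apply Finset.sum_le_sum
      intro i _
      rcases lt_or_ge (i:ℕ) r with hi | hi
      · rw [if_pos hi, hy i, if_pos hi]
        by_cases hmem : ω ∈ A
        · rw [haA, Set.indicator_of_mem hmem]
          have hpos : 0 < S₁ ω := hmem
          have hfeq : f 1 ω = 1 := by
            rw [hf1 ω, ← hS₁app ω]; exact Real.sign_of_pos hpos
          rw [if_pos hfeq]
        · rw [haA, Set.indicator_of_notMem hmem]
          split <;> norm_num
      · rw [if_neg (not_lt.mpr hi), hy i, if_neg (not_lt.mpr hi)]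
        by_cases hmem : ω ∈ B
        · rw [haB, Set.indicator_of_mem hmem]
          have hneg : S₂ ω < 0 := hmem
          have hfeq : f (-1) ω = -1 := by
            rw [hf2 ω, ← hS₂app ω]; exact Real.sign_of_neg hneg
          rw [if_pos hfeq]
        · rw [haB, Set.indicator_of_notMem hmem]
          split <;> norm_num
    have hcount : ∑ i : Fin (2*r), (if (i:ℕ) < r then aA else aB) = r * aA + r * aB := by
      rw [Finset.sum_ite, Finset.sum_const, Finset.sum_const]
      have hc1 : (Finset.univ.filter (fun j : Fin (2*r) => (j:ℕ) < r)).card = r := aux_card r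
      have hc2 : (Finset.univ.filter (fun j : Fin (2*r) => ¬ (j:ℕ) < r)).card = r := by
        simp only [not_lt]
        exact aux_card2 r
      rw [hc1, hc2, nsmul_eq_mul, nsmul_eq_mul]
    have hr0 : (0:ℝ) < r := by exact_mod_cast hr
    have key : (1/(2*(r:ℝ))) * ((r:ℝ) * aA + (r:ℝ) * aB)
        ≤ (1/(2*(r:ℝ))) * ∑ i : Fin (2*r), (if f (y i) ω = y i then (1:ℝ) else 0) := by
      apply mul_le_mul_of_nonneg_left _ (by positivity)
      rw [← hcount]
      exact hsum_ge
    calc G ω = (1/2) * (aA + aB) := by rw [hG]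
      _ = (1/(2*(r:ℝ))) * ((r:ℝ) * aA + (r:ℝ) * aB) := by field_simp
      _ ≤ _ := key
  have hGint_val : ∫ ω, G ω ∂μ = (1/2) * ((μ A).toReal + (μ B).toReal) := by
    rw [hG]
    rw [integral_const_mul]
    rw [integral_add ((integrable_const 1).indicator hAmeas) ((integrable_const 1).indicator hBmeas)]
    rw [integral_indicator_const _ hAmeas, integral_indicator_const _ hBmeas]
    simp [smul_eq_mul, measureReal_def]
  have hmono := integral_mono hGint hFint hGF
  rw [hGint_val] at hmono
  have hE0 : 0 < E := Real.exp_pos _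
  have hEgoal : E = exp (-(p - 1/2)^2 * (2*(r:ℝ))) := hEdef
  calc 1 - 2 * exp (-(p - 1/2)^2 * (2*(r:ℝ)))
      = 1 - 2 * E := by rw [hEgoal]
    _ ≤ (1/2) * ((μ A).toReal + (μ B).toReal) := by linarith
    _ ≤ _ := hmono
end
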